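/- Let σ: ℕ → ℕ be a bijection and let T = T_σ be the associated permutation operator. If some equivalence class [m] is infinite, then P(T) is contained in the closed linear span of {e_n : n ∉ [m]}; equivalently, every x ∈ P(T) satisfies ⟨x, e_k⟩ = 0 for all k ∈ [m]. -/

import Mathlib

/-- The orbit `[n] = {σ^k n : k ∈ ℤ}` of `n` under the bijection `σ : ℕ → ℕ`. -/
def permOrbit (σ : Equiv.Perm ℕ) (n : ℕ) : Set ℕ := {m : ℕ | ∃ z : ℤ, (σ ^ z) n = m}

/-- For a permutation operator `T e_n = e_{σ n}`, if the orbit of `m` under `σ` is infinite,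
then every periodic point of `T` has vanishing coordinates along that orbit, i.e. the
periodic points lie in the closed linear span of `{e_n : n ∉ [m]}`. -/
theorem permutation_periodic_points_vanish_on_infinite_orbit
    {H : Type*} [NormedAddCommGroup H] [InnerProductSpace ℂ H] [CompleteSpace H]
    (e : HilbertBasis ℕ ℂ H) (σ : Equiv.Perm ℕ) (T : H →L[ℂ] H)
    (hT : ∀ n, T (e n) = e (σ n))
    (m : ℕ) (hm : (permOrbit σ m).Infinite) :
    ∀ x : H, (∃ j : ℕ, 0 < j ∧ (T ^ j) x = x) →
      ∀ k ∈ permOrbit σ m, e.repr x k = 0 := by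
  have ho := orthonormal_iff_ite.mp e.orthonormal
  have key : ∀ (y : H) (n : ℕ), e.repr (T y) (σ n) = e.repr y n := by
    intro y n
    have hdense : Dense (Submodule.span ℂ (Set.range e) : Set H) := by
      rw [Submodule.dense_iff_topologicalClosure_eq_top]
      exact e.dense_span
    have heq : (innerSL ℂ (e (σ n))).comp T = innerSL ℂ (e n) := by
      apply ContinuousLinearMap.ext_on hdense
      rintro _ ⟨i, rfl⟩
      simp only [ContinuousLinearMap.comp_apply, innerSL_apply_apply, hT]
      rw [ho, ho]
      simp [σ.injective.eq_iff]
    have h3 := DFunLike.congr_fun heq y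
    simpa [HilbertBasis.repr_apply_apply] using h3
  intro x ⟨j, hj, hjx⟩ k hk
  have hkorb : permOrbit σ k = permOrbit σ m := by
    obtain ⟨z, rfl⟩ := hk
    ext n
    constructor
    · rintro ⟨w, rfl⟩; exact ⟨w + z, by rw [zpow_add]; rfl⟩
    · rintro ⟨w, rfl⟩; exact ⟨w - z, by rw [sub_eq_add_neg, zpow_add, zpow_neg]; simp⟩
  have hkinf : (permOrbit σ k).Infinite := hkorb ▸ hm
  have hinj : Function.Injective (fun z : ℤ => (σ ^ z) k) := by
    intro a b hab
    have hab' : (σ ^ a) k = (σ ^ b) k := hab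
    by_contra hne
    have hp : (σ ^ (a - b)) k = k := by
      have h1 := congrArg (⇑(σ ^ (-b) : Equiv.Perm ℕ)) hab'
      rw [← Equiv.Perm.mul_apply, ← Equiv.Perm.mul_apply, ← zpow_add, ← zpow_add,
        neg_add_cancel, zpow_zero, show -b + a = a - b by ring] at h1
      simpa using h1
    set p : ℤ := |a - b| with hpdef
    have hppos : 0 < p := abs_pos.mpr (sub_ne_zero.mpr hne)
    have hpfix : (σ ^ p) k = k := by
      rcases abs_choice (a - b) with h | h
      · rw [hpdef, h]; exact hp
      · rw [hpdef, h]
        have h2 := congrArg (⇑(σ ^ (-(a - b)) : Equiv.Perm ℕ)) hp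
        rw [← Equiv.Perm.mul_apply, ← zpow_add, neg_add_cancel, zpow_zero] at h2
        simpa using h2.symm
    have hsub : permOrbit σ k ⊆ (fun i : ℕ => (σ ^ (i : ℤ)) k) '' (Set.Iio p.toNat) := by
      rintro _ ⟨z, rfl⟩
      have hr : (σ ^ z) k = (σ ^ (z % p)) k := by
        have hd : (σ ^ (p * (z / p))) k = k := by
          rw [zpow_mul]
          exact Equiv.Perm.zpow_apply_eq_self_of_apply_eq_self hpfix _
        conv_lhs => rw [← Int.emod_add_mul_ediv z p]
        rw [zpow_add, Equiv.Perm.mul_apply, hd]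
      refine ⟨(z % p).toNat, ?_, ?_⟩
      · simp only [Set.mem_Iio]
        have h1 : z % p < p := Int.emod_lt_of_pos z hppos
        have h2 : 0 ≤ z % p := Int.emod_nonneg z hppos.ne'
        omega
      · show (σ ^ (((z % p).toNat : ℕ) : ℤ)) k = (σ ^ z) k
        rw [Int.toNat_of_nonneg (Int.emod_nonneg z hppos.ne')]
        exact hr.symm
    exact hkinf ((Set.Finite.image _ (Set.finite_Iio _)).subset hsub)
  have hTpow : ∀ (p : ℕ) (y : H) (n : ℕ), e.repr ((T ^ p) y) ((σ ^ p) n) = e.repr y n := by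
    intro p
    induction p with
    | zero => simp
    | succ q ih =>
      intro y n
      rw [pow_succ, pow_succ, ContinuousLinearMap.mul_apply (f := T ^ q), Equiv.Perm.mul_apply,
        ih (T y) (σ n), key]
  have hconst : ∀ t : ℕ, e.repr x ((σ ^ (j * t)) k) = e.repr x k := by
    intro t
    induction t with
    | zero => simp
    | succ s ih =>
      have h4 := hTpow j x ((σ ^ (j * s)) k)
      rw [hjx, ← Equiv.Perm.mul_apply, ← pow_add] at h4
      rw [show j * (s + 1) = j + j * s by ring, h4, ih]
  by_contra hc
  have hsum : Summable (fun i : ℕ => ‖e.repr x i‖ ^ (2 : ℝ)) := by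
    have := (lp.memℓp (e.repr x)).summable (p := 2) (by norm_num)
    simpa using this
  have hcof := hsum.tendsto_cofinite_zero
  have hpos : 0 < ‖e.repr x k‖ ^ (2:ℝ) := Real.rpow_pos_of_pos (by simpa using hc) _
  have hfin : {i : ℕ | ‖e.repr x k‖ ^ (2:ℝ) ≤ ‖e.repr x i‖ ^ (2:ℝ)}.Finite := by
    have hev := hcof.eventually_lt_const hpos
    rw [Filter.eventually_cofinite] at hev
    exact hev.subset fun i hi => not_lt.mpr hi
  have himg : Set.range (fun t : ℕ => (σ ^ ((j : ℤ) * t)) k) ⊆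
      {i : ℕ | ‖e.repr x k‖ ^ (2:ℝ) ≤ ‖e.repr x i‖ ^ (2:ℝ)} := by
    rintro _ ⟨t, rfl⟩
    have h5 : (σ ^ ((j : ℤ) * t)) k = (σ ^ (j * t)) k := by
      rw [show ((j : ℤ) * t) = ((j * t : ℕ) : ℤ) by push_cast; ring, zpow_natCast]
    simp only [Set.mem_setOf_eq, h5, hconst t, le_refl]
  have hinf2 : (Set.range (fun t : ℕ => (σ ^ ((j : ℤ) * t)) k)).Infinite := by
    apply Set.infinite_range_of_injective
    intro a b hab
    have h6 : ((j:ℤ) * a) = ((j:ℤ) * b) := hinj hab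
    have hj0 : (j : ℤ) ≠ 0 := by exact_mod_cast hj.ne'
    exact_mod_cast mul_left_cancel₀ hj0 h6
  exact hinf2 (hfin.subset himg)
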